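/- Let z > 0, let ξ₀ be any finite nonnegative Borel measure on ℍ₊, and define for each t ≥ 0 the finite Borel measure ζ(t) on ℍ₊ by ζ(t)(B) = ξ₀(B + (t z⁻¹, t)) + α ∫₀^t ϑ(B + (s z⁻¹, s)) ds for all Borel B ⊆ ℍ₊. Then ζ(t) converges to ϑ_e^z in total variation as t → ∞: sup over Borel B ⊆ ℍ₊ of |ζ(t)(B) − ϑ_e^z(B)| → 0 as t → ∞. -/

import Mathlib

open MeasureTheory Set Filter Topology

noncomputable section

/-- The right half-plane `ℍ₊ = [0,⊤) × ℝ`, as a subset of `ℝ × ℝ`. -/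
def Hplus : Set (ℝ × ℝ) := {p | 0 ≤ p.1}

/-- Translation of a set: `B + w = {b + w : b ∈ B}`. -/
def shiftSet (B : Set (ℝ × ℝ)) (w : ℝ × ℝ) : Set (ℝ × ℝ) := (fun b => b + w) '' B

lemma shiftSet_Hplus (w : ℝ × ℝ) : shiftSet Hplus w = {p : ℝ × ℝ | w.1 ≤ p.1} := by
  ext q
  simp only [shiftSet, Hplus, mem_image, mem_setOf_eq]
  constructor
  · rintro ⟨b, hb, rfl⟩
    simp only [Prod.fst_add]
    linarith
  · intro hq
    refine ⟨q - w, ?_, by simp⟩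
    simp only [Prod.fst_sub]
    linarith

lemma shiftSet_mono {B B' : Set (ℝ × ℝ)} (h : B ⊆ B') (w : ℝ × ℝ) :
    shiftSet B w ⊆ shiftSet B' w := image_mono h

/-- for any finite initial measure `ξ₀` on `ℍ₊`, the fluid-model measure
`ζ(t)(B) = ξ₀(B + (t z⁻¹, t)) + α ∫₀^t ϑ(B + (s z⁻¹, s)) ds` converges to `ϑ_e^z` in
total variation as `t → ⊤`. -/
theorem stmt_15 (α : ℝ) (hα : 0 < α) (ϑ : Measure (ℝ × ℝ)) [IsProbabilityMeasure ϑ]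
    (hϑsupp : ϑ {p : ℝ × ℝ | p.1 < 0} = 0)
    (hϑ0 : ϑ {p : ℝ × ℝ | p.1 = 0} = 0)
    (hϑmean : ∫⁻ p, ENNReal.ofReal p.1 ∂ϑ = ENNReal.ofReal α⁻¹)
    (z : ℝ) (hz : 0 < z) (τ : Measure (ℝ × ℝ)) [IsFiniteMeasure τ]
    (hτsupp : τ {p : ℝ × ℝ | p.1 < 0} = 0)
    (hτ : ∀ B : Set (ℝ × ℝ), MeasurableSet B → B ⊆ Hplus →
      τ B = ENNReal.ofReal α * ∫⁻ u in Ioi (0 : ℝ), ϑ (shiftSet B (u / z, u)))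
    (ξ₀ : Measure (ℝ × ℝ)) [IsFiniteMeasure ξ₀] (hξ₀ : ξ₀ {p : ℝ × ℝ | p.1 < 0} = 0)
    (ζ : ℝ → Measure (ℝ × ℝ))
    (hζ : ∀ t : ℝ, 0 ≤ t → ∀ B : Set (ℝ × ℝ), MeasurableSet B → B ⊆ Hplus →
      ζ t B = ξ₀ (shiftSet B (t / z, t))
        + ENNReal.ofReal α * ∫⁻ s in Ioc (0 : ℝ) t, ϑ (shiftSet B (s / z, s))) :
    ∀ ε : ℝ, 0 < ε → ∃ T : ℝ, 0 ≤ T ∧ ∀ t : ℝ, T ≤ t →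
      ∀ B : Set (ℝ × ℝ), MeasurableSet B → B ⊆ Hplus →
        |(ζ t B).toReal - (τ B).toReal| ≤ ε := by
  intro ε hε
  have hHmeas : MeasurableSet Hplus := measurableSet_le measurable_const measurable_fst
  -- the tail function g
  set g : ℝ → ENNReal := fun u => ϑ {p : ℝ × ℝ | u / z ≤ p.1} with hgdef
  have hganti : Antitone g := by
    intro u v huv
    apply measure_mono
    intro p hp
    have h1 : u / z ≤ v / z := by gcongr
    exact le_trans h1 hp
  have hgmeas : Measurable g := hganti.measurable
  -- finiteness of ∫ g over Ioi 0
  have hταH := hτ Hplus hHmeas (subset_refl _)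
  have hgH : ∀ u : ℝ, ϑ (shiftSet Hplus (u / z, u)) = g u := by
    intro u; rw [shiftSet_Hplus]
  simp only [hgH] at hταH
  have hαne : (ENNReal.ofReal α) ≠ 0 := by
    simp only [ne_eq, ENNReal.ofReal_eq_zero, not_le]; exact hα
  have hgint : ∫⁻ u in Ioi (0:ℝ), g u ≠ ⊤ := by
    intro h
    have hfin := measure_lt_top τ Hplus
    rw [hταH, h, ENNReal.mul_top hαne] at hfin
    exact lt_irrefl _ hfin
  -- tail of ∫ g tends to 0
  set μ : Measure ℝ := (volume.restrict (Ioi (0:ℝ))).withDensity g with hμdef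
  have hμIoi : ∀ n : ℕ, μ (Ioi (n:ℝ)) = ∫⁻ u in Ioi (n:ℝ), g u := by
    intro n
    rw [hμdef, withDensity_apply _ measurableSet_Ioi,
      Measure.restrict_restrict measurableSet_Ioi,
      inter_eq_self_of_subset_left (Ioi_subset_Ioi (Nat.cast_nonneg n))]
  have htend : Tendsto (fun n : ℕ => μ (Ioi (n:ℝ))) atTop (𝓝 0) := by
    have h0 : (⋂ n : ℕ, Ioi ((n:ℕ):ℝ)) = ∅ := by
      ext x
      simp only [mem_iInter, mem_Ioi, mem_empty_iff_false, iff_false, not_forall, not_lt]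
      obtain ⟨n, hn⟩ := exists_nat_ge x
      exact ⟨n, hn⟩
    have := tendsto_measure_iInter_atTop (μ := μ) (s := fun n : ℕ => Ioi ((n:ℕ):ℝ))
      (fun n => measurableSet_Ioi.nullMeasurableSet)
      (fun n m hnm => Ioi_subset_Ioi (by exact_mod_cast hnm))
      ⟨0, by rw [hμIoi 0]; exact_mod_cast hgint⟩
    rw [h0] at this
    simpa [Function.comp_def] using this
  -- choose N₂ controlling the g-tail
  have hε2α : (0:ℝ) < ε / (2 * α) := by positivity
  obtain ⟨N₂, hN₂⟩ := ((ENNReal.tendsto_atTop_zero.mp htend) (ENNReal.ofReal (ε / (2 * α)))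
    (ENNReal.ofReal_pos.mpr hε2α)).imp (fun n h => h n le_rfl)
  -- choose N₁ controlling the ξ₀-tail
  have hξtend : Tendsto (fun n : ℕ => ξ₀ {p : ℝ × ℝ | (n:ℝ) ≤ p.1}) atTop (𝓝 0) := by
    have h0 : (⋂ n : ℕ, {p : ℝ × ℝ | ((n:ℕ):ℝ) ≤ p.1}) = ∅ := by
      ext q
      simp only [mem_iInter, mem_setOf_eq, mem_empty_iff_false, iff_false, not_forall, not_le]
      obtain ⟨n, hn⟩ := exists_nat_gt q.1
      exact ⟨n, hn⟩
    have := tendsto_measure_iInter_atTop (μ := ξ₀) (s := fun n : ℕ => {p : ℝ × ℝ | ((n:ℕ):ℝ) ≤ p.1})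
      (fun n => (measurableSet_le measurable_const measurable_fst).nullMeasurableSet)
      (fun n m hnm p hp => le_trans (by exact_mod_cast hnm : (n:ℝ) ≤ (m:ℝ)) hp)
      ⟨0, measure_ne_top _ _⟩
    rw [h0] at this
    simpa [Function.comp_def] using this
  obtain ⟨N₁, hN₁⟩ := ((ENNReal.tendsto_atTop_zero.mp hξtend) (ENNReal.ofReal (ε / 2))
    (ENNReal.ofReal_pos.mpr (by linarith))).imp (fun n h => h n le_rfl)
  -- define T
  refine ⟨max ((N₁:ℝ) * z) (N₂:ℝ), le_trans (Nat.cast_nonneg N₂) (le_max_right _ _), ?_⟩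
  intro t ht B hB hBH
  have ht0 : (0:ℝ) ≤ t := le_trans (le_trans (Nat.cast_nonneg N₂) (le_max_right _ _)) ht
  have htN₂ : (N₂:ℝ) ≤ t := le_trans (le_max_right _ _) ht
  have htN₁ : (N₁:ℝ) ≤ t / z := by
    rw [le_div_iff₀ hz]
    exact le_trans (le_max_left _ _) ht
  -- the three pieces
  set a : ENNReal := ξ₀ (shiftSet B (t / z, t)) with hadef
  set I₁ : ENNReal := ∫⁻ s in Ioc (0:ℝ) t, ϑ (shiftSet B (s / z, s)) with hI₁def
  set I₂ : ENNReal := ∫⁻ s in Ioi t, ϑ (shiftSet B (s / z, s)) with hI₂def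
  have hptle : ∀ u : ℝ, ϑ (shiftSet B (u / z, u)) ≤ g u := by
    intro u
    refine measure_mono ?_
    refine le_trans (shiftSet_mono hBH _) ?_
    rw [shiftSet_Hplus]
  -- bound on a
  have ha_le : a ≤ ENNReal.ofReal (ε / 2) := by
    refine le_trans ?_ hN₁
    refine measure_mono ?_
    refine le_trans (shiftSet_mono hBH _) ?_
    rw [shiftSet_Hplus]
    intro p hp
    exact le_trans htN₁ hp
  -- bound on I₂
  have hI₂_le : I₂ ≤ ENNReal.ofReal (ε / (2 * α)) := by
    calc I₂ ≤ ∫⁻ u in Ioi t, g u := lintegral_mono fun u => hptle u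
      _ ≤ ∫⁻ u in Ioi (N₂:ℝ), g u := lintegral_mono_set (Ioi_subset_Ioi htN₂)
      _ = μ (Ioi (N₂:ℝ)) := (hμIoi N₂).symm
      _ ≤ ENNReal.ofReal (ε / (2 * α)) := hN₂
  -- finiteness
  have hI₁fin : I₁ ≠ ⊤ := by
    have : I₁ ≤ ∫⁻ u in Ioi (0:ℝ), g u := by
      calc I₁ ≤ ∫⁻ u in Ioc (0:ℝ) t, g u := lintegral_mono fun u => hptle u
        _ ≤ ∫⁻ u in Ioi (0:ℝ), g u := lintegral_mono_set Ioc_subset_Ioi_self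
    exact ne_top_of_le_ne_top hgint this
  have hI₂fin : I₂ ≠ ⊤ := ne_top_of_le_ne_top ENNReal.ofReal_ne_top hI₂_le
  have hafin : a ≠ ⊤ := measure_ne_top _ _
  have hbfin : ENNReal.ofReal α * I₁ ≠ ⊤ := ENNReal.mul_ne_top ENNReal.ofReal_ne_top hI₁fin
  have hcfin : ENNReal.ofReal α * I₂ ≠ ⊤ := ENNReal.mul_ne_top ENNReal.ofReal_ne_top hI₂fin
  -- split τ B
  have hsplit : ∫⁻ u in Ioi (0:ℝ), ϑ (shiftSet B (u / z, u)) = I₁ + I₂ := by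
    rw [← Ioc_union_Ioi_eq_Ioi ht0,
      lintegral_union measurableSet_Ioi (Ioc_disjoint_Ioi le_rfl)]
  have hτB : (τ B).toReal = (ENNReal.ofReal α * I₁).toReal + (ENNReal.ofReal α * I₂).toReal := by
    rw [hτ B hB hBH, hsplit, mul_add, ENNReal.toReal_add hbfin hcfin]
  have hζB : (ζ t B).toReal = a.toReal + (ENNReal.ofReal α * I₁).toReal := by
    rw [hζ t ht0 B hB hBH, ENNReal.toReal_add hafin hbfin]
  -- real bounds
  have haR : a.toReal ≤ ε / 2 :=
    ENNReal.toReal_le_of_le_ofReal (by linarith) ha_le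
  have hcR : (ENNReal.ofReal α * I₂).toReal ≤ ε / 2 := by
    have h1 : ENNReal.ofReal α * I₂ ≤ ENNReal.ofReal (ε / 2) := by
      calc ENNReal.ofReal α * I₂ ≤ ENNReal.ofReal α * ENNReal.ofReal (ε / (2 * α)) := by
            gcongr
        _ = ENNReal.ofReal (α * (ε / (2 * α))) := by
            rw [ENNReal.ofReal_mul hα.le]
        _ = ENNReal.ofReal (ε / 2) := by
            congr 1
            field_simp
    exact ENNReal.toReal_le_of_le_ofReal (by linarith) h1
  have hanneg : 0 ≤ a.toReal := ENNReal.toReal_nonneg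
  have hcnneg : 0 ≤ (ENNReal.ofReal α * I₂).toReal := ENNReal.toReal_nonneg
  rw [hζB, hτB]
  have : a.toReal + (ENNReal.ofReal α * I₁).toReal
      - ((ENNReal.ofReal α * I₁).toReal + (ENNReal.ofReal α * I₂).toReal)
      = a.toReal - (ENNReal.ofReal α * I₂).toReal := by ring
  rw [this]
  rw [abs_sub_le_iff]
  constructor <;> linarith
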